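/- arXiv:quant-ph/0703141 — 3 statements merged into one kernel-verified Lean document; each statement's English description precedes it below -/
import Mathlib

section
/- Let K be a closed, pointed, generating convex cone in a finite-dimensional real inner product space V, let W be a finite-dimensional real inner product space, let A : V → W be a linear map with trivial kernel, and let b ∈ W be nonzero. Then the primal set {x ∈ V : A x = b, x ∈ K} is empty if and only if the dual set {y ∈ W : A* y ∈ K*, ⟨b, y⟩ < 0} is nonempty, where A* is the adjoint of A and K* = {v ∈ V : ⟨v, k⟩ ≥ 0 for all k ∈ K} is the dual cone. -/
theorem conic_feasibility_duality
    {V W : Type*} [NormedAddCommGroup V] [InnerProductSpace ℝ V] [FiniteDimensional ℝ V]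
    [NormedAddCommGroup W] [InnerProductSpace ℝ W] [FiniteDimensional ℝ W]
    (K : ConvexCone ℝ V) (hKclosed : IsClosed (K : Set V))
    (hKpointed : ∀ x : V, x ∈ K → -x ∈ K → x = 0)
    (hKgen : ∀ v : V, ∃ a ∈ K, ∃ b ∈ K, v = a - b)
    (A : V →ₗ[ℝ] W) (hA : LinearMap.ker A = ⊥)
    (b : W) (hb : b ≠ 0) :
    (¬ ∃ x : V, A x = b ∧ x ∈ K) ↔
      ∃ y : W, (∀ k ∈ K, 0 ≤ (inner ℝ (LinearMap.adjoint A y) k : ℝ)) ∧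
        (inner ℝ b y : ℝ) < 0 := by
  constructor
  · intro hempty
    -- image cone
    set KA : ConvexCone ℝ W := K.map A with hKA
    have hAemb := LinearMap.isClosedEmbedding_of_injective hA
    have hKAclosed : IsClosed (KA : Set W) := by
      have : (KA : Set W) = A '' (K : Set V) := rfl
      rw [this]
      exact hAemb.isClosedMap _ hKclosed
    have hKne : (K : Set V).Nonempty := by
      obtain ⟨a, ha, b', hb', -⟩ := hKgen 0
      exact ⟨a, ha⟩
    have hKAne : (KA : Set W).Nonempty := by
      obtain ⟨a, ha⟩ := hKne
      exact ⟨A a, ⟨a, ha, rfl⟩⟩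
    have hbnm : b ∉ KA := by
      rintro ⟨x, hx, hxb⟩
      exact hempty ⟨x, hxb, hx⟩
    obtain ⟨y, hy1, hy2⟩ :=
      ProperCone.hyperplane_separation'
        (C := (⟨KA.toPointedCone (.of_nonempty_of_isClosed hKAne hKAclosed), hKAclosed⟩ :
          ProperCone ℝ W)) hbnm
    refine ⟨y, ?_, ?_⟩
    · intro k hk
      have := hy1 (A k) ⟨k, hk, rfl⟩
      rw [real_inner_comm] at this
      rwa [← LinearMap.adjoint_inner_left] at this
    · exact hy2
  · rintro ⟨y, hy1, hy2⟩ ⟨x, hxA, hxK⟩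
    have := hy1 x hxK
    rw [LinearMap.adjoint_inner_left, hxA, real_inner_comm] at this
    exact absurd hy2 (not_lt.2 this)
end

section
/- Any positive semidefinite matrix ρ on a finite-dimensional Hilbert space H₁ admits a purification: if dim H₂ ≥ rank ρ, then there exists a vector Ψ ∈ H₁ ⊗ H₂ such that the partial trace over H₂ of the projection |Ψ⟩⟨Ψ| equals ρ. -/
open ComplexOrder

/-- Any PSD operator `ρ` on a `d₁`-dimensional space admits a purification into a second
factor of dimension `d₂ ≥ rank ρ`: there is `Ψ ∈ H₁ ⊗ H₂` with `tr_{H₂} |Ψ⟩⟨Ψ| = ρ`. -/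
theorem purification_exists
    {d₁ d₂ : ℕ} (ρ : Matrix (Fin d₁) (Fin d₁) ℂ) (hρ : ρ.PosSemidef)
    (hrank : ρ.rank ≤ d₂) :
    ∃ Ψ : Fin d₁ × Fin d₂ → ℂ,
      ∀ i j, (∑ k, Ψ (i, k) * star (Ψ (j, k))) = ρ i j := by
  classical
  have h : ρ.IsHermitian := hρ.1
  set μ : Fin d₁ → ℝ := h.eigenvalues with hμ
  set U : Matrix (Fin d₁) (Fin d₁) ℂ := (h.eigenvectorUnitary : Matrix (Fin d₁) (Fin d₁) ℂ)
    with hU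
  set D : Matrix (Fin d₁) (Fin d₁) ℂ :=
    Matrix.diagonal (fun n => ((Real.sqrt (μ n) : ℝ) : ℂ)) with hD
  set B : Matrix (Fin d₁) (Fin d₁) ℂ := U * D with hBdef
  have hBval : ∀ i n, B i n = U i n * (Real.sqrt (μ n) : ℂ) := by
    intro i n
    simp [hBdef, hD, Matrix.mul_diagonal]
  have hDD : D * D.conjTranspose = Matrix.diagonal (RCLike.ofReal ∘ μ) := by
    rw [hD, Matrix.diagonal_conjTranspose, Matrix.diagonal_mul_diagonal]
    refine congrArg Matrix.diagonal (funext fun n => ?_)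
    simp only [Pi.star_apply, RCLike.star_def, Complex.conj_ofReal, Function.comp_apply]
    rw [← Complex.ofReal_mul, Real.mul_self_sqrt (hρ.eigenvalues_nonneg n)]
    rfl
  have hB : B * B.conjTranspose = ρ := by
    rw [hBdef, Matrix.conjTranspose_mul]
    calc U * D * (D.conjTranspose * U.conjTranspose)
        = U * (D * D.conjTranspose) * U.conjTranspose := by
          simp only [Matrix.mul_assoc]
      _ = ρ := by
          rw [hDD, ← Matrix.star_eq_conjTranspose]
          conv_rhs => rw [h.spectral_theorem, Unitary.conjStarAlgAut_apply]
  have key : ∀ i j : Fin d₁, ∑ n, B i n * star (B j n) = ρ i j := by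
    intro i j
    rw [← hB, Matrix.mul_apply]
    refine Finset.sum_congr rfl fun n _ => ?_
    rw [Matrix.conjTranspose_apply]
  have hcard : Fintype.card {n // μ n ≠ 0} ≤ Fintype.card (Fin d₂) := by
    rw [Fintype.card_fin]
    exact h.rank_eq_card_non_zero_eigs ▸ hrank
  obtain ⟨e⟩ := Function.Embedding.nonempty_of_card_le hcard
  refine ⟨fun p => ∑ m : {n // μ n ≠ 0}, if e m = p.2 then B p.1 m.1 else 0, fun i j => ?_⟩
  calc ∑ k, (∑ m : {n // μ n ≠ 0}, if e m = k then B i m.1 else 0) *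
        star (∑ m : {n // μ n ≠ 0}, if e m = k then B j m.1 else 0)
      = ∑ m : {n // μ n ≠ 0}, B i m.1 * star (B j m.1) := by
        simp only [star_sum, Finset.sum_mul_sum]
        rw [Finset.sum_comm]
        refine Finset.sum_congr rfl fun m _ => ?_
        rw [Finset.sum_comm, Finset.sum_eq_single m]
        · rw [Finset.sum_eq_single (e m)]
          · simp
          · intro k _ hk
            simp [Ne.symm hk]
          · simp
        · intro b _ hb
          apply Finset.sum_eq_zero
          intro k _
          rcases eq_or_ne (e m) k with h1 | h1
          · have hbk : e b ≠ k := fun hh => hb (e.injective (hh.trans h1.symm))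
            simp [hbk]
          · simp [h1]
        · simp
    _ = ∑ n, B i n * star (B j n) := by
        rw [← Finset.sum_subtype (Finset.univ.filter fun n => μ n ≠ 0)
          (by simp) (fun n => B i n * star (B j n))]
        apply Finset.sum_subset (Finset.filter_subset _ _)
        intro n _ hn
        simp only [Finset.mem_filter, Finset.mem_univ, true_and] at hn
        push_neg at hn
        simp [hBval, hn]
    _ = ρ i j := key i j
end

section
/- If Ψ and Φ are two vectors in H₁ ⊗ H₂ that purify the same positive semidefinite operator ρ on H₁ (i.e. tr_{H₂}|Ψ⟩⟨Ψ| = tr_{H₂}|Φ⟩⟨Φ| = ρ), then there exists a unitary U on H₂ with (I ⊗ U)Ψ = Φ. -/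
open ComplexOrder

noncomputable def Tmap {d₁ d₂ : ℕ} (A : Fin d₁ → Fin d₂ → ℂ) :
    EuclideanSpace ℂ (Fin d₁) →ₗ[ℂ] EuclideanSpace ℂ (Fin d₂) :=
  (WithLp.linearEquiv 2 ℂ (Fin d₂ → ℂ)).symm.toLinearMap ∘ₗ
    (Matrix.of A).conjTranspose.mulVecLin ∘ₗ (WithLp.linearEquiv 2 ℂ (Fin d₁ → ℂ)).toLinearMap

lemma Tmap_apply {d₁ d₂ : ℕ} (A : Fin d₁ → Fin d₂ → ℂ) (x : EuclideanSpace ℂ (Fin d₁))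
    (k : Fin d₂) : Tmap A x k = ∑ i, star (A i k) * x i := by
  simp [Tmap, Matrix.mulVecLin, Matrix.mulVec, dotProduct]

lemma inner_Tmap {d₁ d₂ : ℕ} (A : Fin d₁ → Fin d₂ → ℂ) (x y : EuclideanSpace ℂ (Fin d₁)) :
    (inner ℂ (Tmap A x) (Tmap A y) : ℂ) =
      ∑ i, ∑ j, (starRingEnd ℂ) (x i) * y j * (∑ k, A i k * star (A j k)) := by
  simp only [PiLp.inner_apply, Tmap_apply, RCLike.inner_apply']
  have key : ∀ k, (starRingEnd ℂ) (∑ i, star (A i k) * x i) * ∑ j, star (A j k) * y j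
      = ∑ i, ∑ j, (starRingEnd ℂ) (x i) * y j * (A i k * star (A j k)) := by
    intro k
    rw [map_sum, Finset.sum_mul_sum]
    refine Finset.sum_congr rfl fun i _ => Finset.sum_congr rfl fun j _ => ?_
    simp only [map_mul, starRingEnd_apply, star_star]
    ring
  calc (∑ k, (starRingEnd ℂ) (∑ i, star (A i k) * x i) * ∑ j, star (A j k) * y j)
      = ∑ k, ∑ i, ∑ j, (starRingEnd ℂ) (x i) * y j * (A i k * star (A j k)) :=
        Finset.sum_congr rfl fun k _ => key k
    _ = ∑ i, ∑ j, (starRingEnd ℂ) (x i) * y j * ∑ k, A i k * star (A j k) := by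
        rw [Finset.sum_comm]
        refine Finset.sum_congr rfl fun i _ => ?_
        rw [Finset.sum_comm]
        exact Finset.sum_congr rfl fun j _ => (Finset.mul_sum _ _ _).symm

lemma aux_unitary {d₁ d₂ : ℕ} (M N : Fin d₁ → Fin d₂ → ℂ)
    (h : ∀ i j, (∑ k, M i k * star (M j k)) = ∑ k, N i k * star (N j k)) :
    ∃ U ∈ Matrix.unitaryGroup (Fin d₂) ℂ,
      ∀ i k, N i k = ∑ l, U k l * M i l := by
  classical
  set TM := Tmap M with hTM
  set TN := Tmap N with hTN
  have inner_eq : ∀ x y : EuclideanSpace ℂ (Fin d₁),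
      (inner ℂ (TM x) (TM y) : ℂ) = inner ℂ (TN x) (TN y) := by
    intro x y
    rw [hTM, hTN, inner_Tmap, inner_Tmap]
    exact Finset.sum_congr rfl fun i _ => Finset.sum_congr rfl fun j _ => by rw [h i j]
  -- kernel inclusion
  have ker_le : LinearMap.ker TM ≤ LinearMap.ker TN := by
    intro x hx
    rw [LinearMap.mem_ker] at hx ⊢
    have : (inner ℂ (TN x) (TN x) : ℂ) = 0 := by rw [← inner_eq, hx, inner_zero_right]
    exact inner_self_eq_zero.mp this
  set qN := (LinearMap.ker TM).liftQ TN ker_le with hqN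
  set e := TM.quotKerEquivRange with he
  set g : LinearMap.range TM →ₗ[ℂ] EuclideanSpace ℂ (Fin d₂) := qN ∘ₗ e.symm.toLinearMap with hg
  have g_apply : ∀ x : EuclideanSpace ℂ (Fin d₁),
      g ⟨TM x, LinearMap.mem_range_self TM x⟩ = TN x := by
    intro x
    have h1 : e (Submodule.Quotient.mk x) = ⟨TM x, LinearMap.mem_range_self TM x⟩ :=
      Subtype.ext (TM.quotKerEquivRange_apply_mk x)
    rw [hg]
    simp only [LinearMap.comp_apply, LinearEquiv.coe_toLinearMap]
    rw [← h1, LinearEquiv.symm_apply_apply, hqN, Submodule.liftQ_apply]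
  have g_norm : ∀ s : LinearMap.range TM, ‖g s‖ = ‖s‖ := by
    rintro ⟨s, x, rfl⟩
    rw [g_apply x]
    have h1 : (inner ℂ (TN x) (TN x) : ℂ) = inner ℂ (TM x) (TM x) := (inner_eq x x).symm
    rw [inner_self_eq_norm_sq_to_K, inner_self_eq_norm_sq_to_K] at h1
    have h2 : ‖TN x‖ ^ 2 = ‖TM x‖ ^ 2 := by exact_mod_cast h1
    have := (sq_eq_sq₀ (norm_nonneg (TN x)) (norm_nonneg (TM x))).mp h2
    simpa using this
  set L : LinearMap.range TM →ₗᵢ[ℂ] EuclideanSpace ℂ (Fin d₂) := ⟨g, g_norm⟩ with hL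
  set W := L.extend with hW
  have W_TM : ∀ x, W (TM x) = TN x := by
    intro x
    have := L.extend_apply ⟨TM x, LinearMap.mem_range_self TM x⟩
    rw [hW]
    rw [show TM x = (⟨TM x, LinearMap.mem_range_self TM x⟩ : LinearMap.range TM).1 from rfl]
    rw [this, hL]
    exact g_apply x
  set E : Fin d₂ → EuclideanSpace ℂ (Fin d₂) := fun l => EuclideanSpace.single l 1 with hE
  set U' : Matrix (Fin d₂) (Fin d₂) ℂ := Matrix.of fun k l => W (E l) k with hU'
  have decomp : ∀ v : EuclideanSpace ℂ (Fin d₂), v = ∑ l, v l • E l := by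
    intro v
    ext k
    rw [WithLp.ofLp_sum, Finset.sum_apply]
    simp [hE, EuclideanSpace.single_apply]
  have W_apply : ∀ (v : EuclideanSpace ℂ (Fin d₂)) (k : Fin d₂), W v k = ∑ l, U' k l * v l := by
    intro v k
    conv_lhs => rw [decomp v, map_sum]
    rw [WithLp.ofLp_sum, Finset.sum_apply]
    refine Finset.sum_congr rfl fun l _ => ?_
    rw [map_smul]
    simp [hU', mul_comm]
  have col : ∀ l l', (∑ k, (starRingEnd ℂ) (U' k l) * U' k l') = if l = l' then 1 else 0 := by
    intro l l'
    have h1 : (inner ℂ (W (E l)) (W (E l')) : ℂ) = inner ℂ (E l) (E l') := W.inner_map_map _ _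
    simp only [PiLp.inner_apply, RCLike.inner_apply'] at h1
    rw [show (∑ k, (starRingEnd ℂ) (U' k l) * U' k l')
        = ∑ k, (starRingEnd ℂ) (W (E l) k) * W (E l') k from rfl, h1, hE]
    simp [EuclideanSpace.single_apply, Finset.sum_ite_eq, eq_comm]
  refine ⟨Matrix.of fun k l => (starRingEnd ℂ) (U' k l), ?_, ?_⟩
  · rw [Matrix.mem_unitaryGroup_iff']
    ext l l'
    rw [Matrix.mul_apply, Matrix.one_apply]
    have : ∀ k : Fin d₂, (star (Matrix.of fun k l => (starRingEnd ℂ) (U' k l))) l k *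
        (Matrix.of fun k l => (starRingEnd ℂ) (U' k l)) k l'
        = (starRingEnd ℂ) ((starRingEnd ℂ) (U' k l) * U' k l') := by
      intro k
      simp only [Matrix.star_apply, Matrix.of_apply, map_mul, starRingEnd_apply, star_star]
    rw [Finset.sum_congr rfl fun k _ => this k, ← map_sum, col]
    split <;> simp
  · intro i k
    have hsM : TM (EuclideanSpace.single i 1) = fun k => star (M i k) := by
      ext k
      rw [hTM, Tmap_apply]
      simp [EuclideanSpace.single_apply]
    have hsN : TN (EuclideanSpace.single i 1) = fun k => star (N i k) := by
      ext k
      rw [hTN, Tmap_apply]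
      simp [EuclideanSpace.single_apply]
    have h1 : star (N i k) = ∑ l, U' k l * star (M i l) := by
      have h2 := W_TM (EuclideanSpace.single i 1)
      have h3 := congrFun (congrArg WithLp.ofLp h2) k
      simp only [hsN] at h3
      rw [← h3, W_apply]
      refine Finset.sum_congr rfl fun l _ => ?_
      rw [hsM]
    have h4 := congrArg (starRingEnd ℂ) h1
    rw [map_sum, starRingEnd_apply, star_star] at h4
    rw [h4]
    refine Finset.sum_congr rfl fun l _ => ?_
    simp only [star_mul, star_star, Matrix.of_apply, starRingEnd_apply]
    ring

/-- Two purifications of the same PSD operator `ρ` are related by a unitary on the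
second factor: `(I ⊗ U) Ψ = Φ`. -/
theorem purifications_related_by_unitary
    {d₁ d₂ : ℕ} (hd : d₁ ≤ d₂)
    (ρ : Matrix (Fin d₁) (Fin d₁) ℂ) (hρ : ρ.PosSemidef)
    (Ψ Φ : Fin d₁ × Fin d₂ → ℂ)
    (hΨ : ∀ i j, (∑ k, Ψ (i, k) * star (Ψ (j, k))) = ρ i j)
    (hΦ : ∀ i j, (∑ k, Φ (i, k) * star (Φ (j, k))) = ρ i j) :
    ∃ U ∈ Matrix.unitaryGroup (Fin d₂) ℂ,
      ∀ i k, Φ (i, k) = ∑ l, U k l * Ψ (i, l) := by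
  exact aux_unitary (fun i k => Ψ (i, k)) (fun i k => Φ (i, k))
    (fun i j => by rw [hΨ i j, hΦ i j])
end
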